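/- For the complete graph on n vertices, the chromatic quasisymmetric function (restricted to variables x₁,…,x_N with parameter t) equals [n]_t! · e_n(x₁,…,x_N), where the chromatic quasisymmetric function is defined as the sum over proper colorings κ : [n] → [N] of t^{asc(κ)} x_{κ(1)}⋯x_{κ(n)}, with asc(κ) = #{edges {i,j}, i < j, with κ(i) < κ(j)}. -/

import Mathlib

open MvPolynomial

/-- ascent statistic of a coloring of the complete graph `K_n`:
`asc(κ) = #{(i,j) : i < j, κ(i) < κ(j)}`. -/
def ascK (n N : ℕ) (κ : Fin n → Fin N) : ℕ :=
  (Finset.univ.filter fun p : Fin n × Fin n => p.1 < p.2 ∧ κ p.1 < κ p.2).card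


lemma ascK_comp_strictMono {n m M : ℕ} {g : Fin m → Fin M} (hg : StrictMono g)
    (κ : Fin n → Fin m) : ascK n M (g ∘ κ) = ascK n m κ := by
  unfold ascK
  congr 1
  apply Finset.filter_congr
  intro p _
  simp [hg.lt_iff_lt]

lemma card_le_filter {n : ℕ} (p : Fin (n + 1)) :
    (Finset.univ.filter fun x : Fin n => (p : ℕ) ≤ (x : ℕ)).card = n - p := by
  rw [← Finset.card_range (n - p)]
  refine Finset.card_bij' (fun x _ => (x : ℕ) - p)
      (fun j hj => ⟨j + p, by have := Finset.mem_range.1 hj; omega⟩) ?_ ?_ ?_ ?_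
  · intro x hx
    have hx' := (Finset.mem_filter.1 hx).2
    have := x.isLt
    simp only [Finset.mem_range]
    omega
  · intro j hj
    have := Finset.mem_range.1 hj
    simp
  · intro x hx
    have hx' := (Finset.mem_filter.1 hx).2
    ext; simp; omega
  · intro j hj
    have := Finset.mem_range.1 hj
    simp

/-- The insertion map building a permutation of `Fin (n+1)` from the image of `0`
and a permutation of the rest. -/
def insMap {n : ℕ} (p : Fin (n + 1)) (τ : Equiv.Perm (Fin n)) : Fin (n + 1) → Fin (n + 1) :=
  Fin.cases p (fun i => p.succAbove (τ i))

lemma insMap_injective {n : ℕ} (p : Fin (n + 1)) (τ : Equiv.Perm (Fin n)) :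
    Function.Injective (insMap p τ) := by
  intro x y hxy
  induction x using Fin.cases with
  | zero =>
    induction y using Fin.cases with
    | zero => rfl
    | succ j => simp [insMap] at hxy
  | succ i =>
    induction y using Fin.cases with
    | zero => simp [insMap] at hxy
    | succ j =>
      simp [insMap] at hxy
      subst hxy; rfl

lemma ascK_insMap {n : ℕ} (p : Fin (n + 1)) (τ : Equiv.Perm (Fin n)) :
    ascK (n + 1) (n + 1) (insMap p τ) = (n - p) + ascK n n τ := by
  classical
  unfold ascK
  set σ := insMap p τ with hσ
  have hσ0 : σ 0 = p := rfl
  have hσs : ∀ i : Fin n, σ i.succ = p.succAbove (τ i) := fun i => rfl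
  rw [← Finset.card_filter_add_card_filter_not
    (p := fun q : Fin (n+1) × Fin (n+1) => q.1 = 0)]
  congr 1
  -- first piece: pairs (0, j)
  · have himg : (Finset.univ.filter fun q : Fin (n+1) × Fin (n+1) =>
        q.1 < q.2 ∧ σ q.1 < σ q.2).filter (fun q => q.1 = 0) =
        Finset.image (fun x : Fin n => ((0 : Fin (n+1)), x.succ))
          (Finset.univ.filter fun x : Fin n => (p : ℕ) ≤ (τ x : ℕ)) := by
      ext q
      simp only [Finset.mem_filter, Finset.mem_image, Finset.mem_univ, true_and]
      constructor
      · rintro ⟨⟨hlt, hval⟩, h0⟩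
        obtain ⟨a, b⟩ := q
        simp only at h0 hlt hval ⊢
        subst h0
        induction b using Fin.cases with
        | zero => exact absurd hlt (lt_irrefl _)
        | succ j =>
          refine ⟨j, ?_, rfl⟩
          rw [hσ0, hσs, Fin.lt_succAbove_iff_le_castSucc] at hval
          simpa [Fin.le_def] using hval
      · rintro ⟨x, hx, rfl⟩
        refine ⟨⟨Fin.succ_pos _, ?_⟩, rfl⟩
        rw [hσ0, hσs, Fin.lt_succAbove_iff_le_castSucc]
        simpa [Fin.le_def] using hx
    rw [himg, Finset.card_image_of_injective _ (by
      intro a b hab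
      simpa [Fin.succ_inj] using hab)]
    rw [← card_le_filter p]
    refine Finset.card_nbij (i := fun x => τ x) ?_ ?_ ?_
    · intro a ha
      simpa using (Finset.mem_filter.1 ha).2
    · exact τ.injective.injOn
    · intro y hy
      simp only [Finset.coe_filter, Set.mem_setOf_eq, Finset.mem_univ, true_and] at hy
      exact ⟨τ.symm y, by simpa using hy, by simp⟩
  -- second piece: pairs (i+1, j+1)
  · have himg : (Finset.univ.filter fun q : Fin (n+1) × Fin (n+1) =>
        q.1 < q.2 ∧ σ q.1 < σ q.2).filter (fun q => ¬ q.1 = 0) =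
        Finset.image (fun r : Fin n × Fin n => (r.1.succ, r.2.succ))
          (Finset.univ.filter fun r : Fin n × Fin n => r.1 < r.2 ∧ τ r.1 < τ r.2) := by
      ext q
      simp only [Finset.mem_filter, Finset.mem_image, Finset.mem_univ, true_and]
      constructor
      · rintro ⟨⟨hlt, hval⟩, h0⟩
        obtain ⟨a, b⟩ := q
        simp only at h0 hlt hval ⊢
        induction a using Fin.cases with
        | zero => exact absurd rfl h0
        | succ i =>
          induction b using Fin.cases with
          | zero => exact absurd hlt (by simp [Fin.lt_def])
          | succ j =>
            refine ⟨(i, j), ⟨?_, ?_⟩, rfl⟩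
            · exact Fin.succ_lt_succ_iff.1 hlt
            · rw [hσs, hσs, Fin.succAbove_lt_succAbove_iff] at hval
              exact hval
      · rintro ⟨r, ⟨h1, h2⟩, rfl⟩
        refine ⟨⟨Fin.succ_lt_succ_iff.2 h1, ?_⟩, Fin.succ_ne_zero _⟩
        rw [hσs, hσs, Fin.succAbove_lt_succAbove_iff]
        exact h2
    rw [himg, Finset.card_image_of_injective _ (by
      intro a b hab
      simp only [Prod.mk.injEq, Fin.succ_inj] at hab
      exact Prod.ext hab.1 hab.2)]

/-- `insMap` as a permutation. -/
noncomputable def insPerm {n : ℕ} (pq : Fin (n + 1) × Equiv.Perm (Fin n)) :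
    Equiv.Perm (Fin (n + 1)) :=
  Equiv.ofBijective (insMap pq.1 pq.2)
    ((Finite.injective_iff_bijective).1 (insMap_injective pq.1 pq.2))

lemma insPerm_bijective (n : ℕ) : Function.Bijective (insPerm (n := n)) := by
  rw [Fintype.bijective_iff_injective_and_card]
  constructor
  · intro ⟨p, τ⟩ ⟨p', τ'⟩ h
    have hfun : ∀ x, insMap p τ x = insMap p' τ' x := fun x => Equiv.ext_iff.1 h x
    have hp : p = p' := by
      have := hfun 0
      simpa [insMap] using this
    subst hp
    have hτ : ∀ i, τ i = τ' i := by
      intro i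
      have := hfun i.succ
      simp only [insMap, Fin.cases_succ] at this
      exact Fin.succAbove_right_injective this
    exact Prod.ext rfl (Equiv.ext hτ)
  · simp [Fintype.card_perm, Nat.factorial_succ]

lemma perm_sum (n : ℕ) :
    (∑ σ : Equiv.Perm (Fin n), (Polynomial.X : Polynomial ℤ) ^ ascK n n σ) =
      ∏ i ∈ Finset.range n, ∑ j ∈ Finset.range (i + 1), (Polynomial.X : Polynomial ℤ) ^ j := by
  induction n with
  | zero =>
    simp [ascK]
  | succ n ih =>
    rw [← Function.Bijective.sum_comp (insPerm_bijective n)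
      (fun σ => (Polynomial.X : Polynomial ℤ) ^ ascK (n+1) (n+1) σ)]
    have hval : ∀ pq : Fin (n + 1) × Equiv.Perm (Fin n),
        (Polynomial.X : Polynomial ℤ) ^ ascK (n+1) (n+1) (insPerm pq) =
        Polynomial.X ^ ((n : ℕ) - pq.1) * Polynomial.X ^ ascK n n pq.2 := by
      intro ⟨p, τ⟩
      have : (insPerm (p, τ) : Fin (n+1) → Fin (n+1)) = insMap p τ := rfl
      rw [this, ascK_insMap, pow_add]
    rw [Finset.sum_congr rfl (fun pq _ => hval pq)]
    rw [Fintype.sum_prod_type]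
    simp only [← Finset.mul_sum]
    rw [← Finset.sum_mul, ih, Finset.prod_range_succ]
    rw [mul_comm]
    congr 1
    rw [Fin.sum_univ_eq_sum_range (fun i => (Polynomial.X : Polynomial ℤ) ^ (n - i)) (n+1)]
    have := Finset.sum_range_reflect (fun j => (Polynomial.X : Polynomial ℤ) ^ j) (n + 1)
    simpa using this

theorem cqf_aux (n N : ℕ) :
    (∑ κ : Fin n → Fin N,
        if Function.Injective κ then
          (MvPolynomial.C (Polynomial.X ^ ascK n N κ) *
            ∏ v : Fin n, MvPolynomial.X (κ v) : MvPolynomial (Fin N) (Polynomial ℤ))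
        else 0) =
      (∏ i ∈ Finset.range n,
          MvPolynomial.C (∑ j ∈ Finset.range (i + 1), (Polynomial.X : Polynomial ℤ) ^ j)) *
        ∑ s ∈ Finset.powersetCard n (Finset.univ : Finset (Fin N)),
          ∏ v ∈ s, MvPolynomial.X v := by
  classical
  rw [← Finset.sum_filter]
  have hmaps : ∀ κ ∈ Finset.univ.filter (fun κ : Fin n → Fin N => Function.Injective κ),
      Finset.image κ Finset.univ ∈
        Finset.powersetCard n (Finset.univ : Finset (Fin N)) := by
    intro κ hκ
    have hinj := (Finset.mem_filter.1 hκ).2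
    rw [Finset.mem_powersetCard]
    exact ⟨Finset.subset_univ _, by
      rw [Finset.card_image_of_injective _ hinj, Finset.card_univ, Fintype.card_fin]⟩
  rw [← Finset.sum_fiberwise_of_maps_to hmaps, Finset.mul_sum]
  refine Finset.sum_congr rfl ?_
  intro s hs
  have hsc : s.card = n := (Finset.mem_powersetCard.1 hs).2
  set g : Fin n → Fin N := ⇑(s.orderEmbOfFin hsc) with hg
  have hginj : Function.Injective g := (s.orderEmbOfFin hsc).injective
  have hgmono : StrictMono g := (s.orderEmbOfFin hsc).strictMono
  have hgmem : ∀ i, g i ∈ s := fun i => Finset.orderEmbOfFin_mem s hsc i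
  have himg : Finset.image g Finset.univ = s := by
    apply Finset.eq_of_subset_of_card_le
    · intro u hu
      obtain ⟨v, _, rfl⟩ := Finset.mem_image.1 hu
      exact hgmem v
    · rw [Finset.card_image_of_injective _ hginj, Finset.card_univ, Fintype.card_fin, hsc]
  have key : (∑ σ : Equiv.Perm (Fin n),
      (MvPolynomial.C (Polynomial.X ^ ascK n n σ) *
        ∏ v ∈ s, MvPolynomial.X v : MvPolynomial (Fin N) (Polynomial ℤ))) =
      ∑ κ ∈ (Finset.univ.filter fun κ : Fin n → Fin N => Function.Injective κ).filter
          (fun κ => Finset.image κ Finset.univ = s),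
        MvPolynomial.C (Polynomial.X ^ ascK n N κ) * ∏ v : Fin n, MvPolynomial.X (κ v) := by
    refine Finset.sum_bij (fun σ _ => g ∘ σ) ?_ ?_ ?_ ?_
    · intro σ _
      simp only [Finset.mem_filter, Finset.mem_univ, true_and]
      constructor
      · exact hginj.comp σ.injective
      · rw [← Finset.image_image, Finset.image_univ_equiv, himg]
    · intro σ _ σ' _ h
      exact Equiv.ext fun i => hginj (congrFun h i)
    · intro κ hκ
      have hinj := (Finset.mem_filter.1 (Finset.mem_filter.1 hκ).1).2
      have himgκ := (Finset.mem_filter.1 hκ).2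
      have hmem : ∀ i, κ i ∈ s := by
        intro i
        rw [← himgκ]
        exact Finset.mem_image_of_mem κ (Finset.mem_univ i)
      set ψ : Fin n → Fin n := fun i => (s.orderIsoOfFin hsc).symm ⟨κ i, hmem i⟩ with hψ
      have hψinj : Function.Injective ψ := by
        intro a b hab
        have := congrArg (s.orderIsoOfFin hsc) hab
        simp only [hψ, OrderIso.apply_symm_apply, Subtype.mk.injEq] at this
        exact hinj this
      refine ⟨Equiv.ofBijective ψ ((Finite.injective_iff_bijective).1 hψinj),
        Finset.mem_univ _, ?_⟩
      funext i
      show g (ψ i) = κ i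
      rw [hg, ← Finset.coe_orderIsoOfFin_apply, hψ]
      simp
    · intro σ _
      show (MvPolynomial.C (Polynomial.X ^ ascK n n ⇑σ) * ∏ v ∈ s, MvPolynomial.X v :
          MvPolynomial (Fin N) (Polynomial ℤ)) =
        MvPolynomial.C (Polynomial.X ^ ascK n N (g ∘ ⇑σ)) *
          ∏ v : Fin n, MvPolynomial.X ((g ∘ ⇑σ) v)
      rw [ascK_comp_strictMono hgmono]
      congr 1
      simp only [Function.comp_apply]
      rw [Equiv.prod_comp σ (fun v => (MvPolynomial.X (g v) :
          MvPolynomial (Fin N) (Polynomial ℤ)))]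
      refine (Finset.prod_bij (fun v _ => g v) ?_ ?_ ?_ ?_).symm
      · intro v _; exact hgmem v
      · intro a _ b _ h; exact hginj h
      · intro u hu
        have : u ∈ Set.range g := by rw [Finset.range_orderEmbOfFin]; exact hu
        obtain ⟨v, rfl⟩ := this
        exact ⟨v, Finset.mem_univ v, rfl⟩
      · intro v _; rfl
  rw [← key, ← Finset.sum_mul, ← map_sum, perm_sum, map_prod]

theorem cqf_complete_graph (n N : ℕ) (hn : 1 ≤ n) (hN : 1 ≤ N) :
    (∑ κ : Fin n → Fin N,
        if Function.Injective κ then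
          (MvPolynomial.C (Polynomial.X ^ ascK n N κ) *
            ∏ v : Fin n, MvPolynomial.X (κ v) : MvPolynomial (Fin N) (Polynomial ℤ))
        else 0) =
      (∏ i ∈ Finset.range n,
          MvPolynomial.C (∑ j ∈ Finset.range (i + 1), (Polynomial.X : Polynomial ℤ) ^ j)) *
        ∑ s ∈ Finset.powersetCard n (Finset.univ : Finset (Fin N)),
          ∏ v ∈ s, MvPolynomial.X v := cqf_aux n N
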